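/- In the quotient ring R = ℤ[u₀,u₁,u₂,u₃]/I₆ where I₆ = (u₀u₁u₂u₃ − 1, (u₀⁶−1)/(u₀−1), ..., (u₃⁶−1)/(u₃−1)), the tensor product R ⊗ ℚ is a finite-dimensional ℚ-vector space of dimension 105. -/

import Mathlib

open MvPolynomial TensorProduct

/-- The ideal `I₆ = (u₀u₁u₂u₃ − 1, 1+u₀+⋯+u₀⁵, …, 1+u₃+⋯+u₃⁵)` in
`ℤ[u₀,u₁,u₂,u₃]`. -/
noncomputable def fermatIdeal6 : Ideal (MvPolynomial (Fin 4) ℤ) :=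
  Ideal.span ({X 0 * X 1 * X 2 * X 3 - 1} ∪
    Set.range fun i : Fin 4 => ∑ j ∈ Finset.range 6, (X i) ^ j)

namespace Fermat6Aux

noncomputable section

/-! ### The polynomial `q = X⁵+X⁴+X³+X²+X+1` and the tower of adjoined roots -/

def qpoly (R : Type) [CommRing R] : Polynomial R := Polynomial.X^5+Polynomial.X^4+Polynomial.X^3
  +Polynomial.X^2+Polynomial.X+1

lemma qpoly_monic (R : Type) [CommRing R] : (qpoly R).Monic := by unfold qpoly; monicity!

lemma qpoly_natDegree (R : Type) [CommRing R] [Nontrivial R] : (qpoly R).natDegree = 5 := by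
  unfold qpoly; compute_degree!

variable {R : Type} [CommRing R]

def pp (w : R) : R := w^5+w^4+w^3+w^2+w+1

lemma pp_root_eq_zero : pp (AdjoinRoot.root (qpoly R)) = 0 := by
  have h : AdjoinRoot.mk (qpoly R) (Polynomial.X^5+Polynomial.X^4+Polynomial.X^3
      +Polynomial.X^2+Polynomial.X+1) = 0 := AdjoinRoot.mk_self
  simp only [map_add, map_pow, map_one, AdjoinRoot.mk_X] at h
  simpa [pp] using h

lemma root_pow_six : (AdjoinRoot.root (qpoly R))^6 = 1 := by
  have h := pp_root_eq_zero (R := R)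
  simp only [pp] at h
  linear_combination (AdjoinRoot.root (qpoly R) - 1) * h

lemma adjoinRootExt {S : Type*} [CommRing S] {f : Polynomial R} {F G : AdjoinRoot f →+* S}
    (h : F.comp (AdjoinRoot.mk f) = G.comp (AdjoinRoot.mk f)) : F = G :=
  RingHom.ext fun a => by
    obtain ⟨p, rfl⟩ := AdjoinRoot.mk_surjective a
    exact RingHom.congr_fun h p

/-! ### Elimination isomorphism -/

set_option maxHeartbeats 1000000 in
/-- elimination: `R[x]/(q(x), w·x-1) ≃ R/(pp w)` for `w⁶ = 1`. -/
def elimEquiv (w : R) (hw : w^6 = 1) :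
    (AdjoinRoot (qpoly R) ⧸ Ideal.span {AdjoinRoot.of (qpoly R) w * AdjoinRoot.root (qpoly R) - 1})
      ≃+* (R ⧸ Ideal.span {pp w}) := by
  set J1 := Ideal.span {AdjoinRoot.of (qpoly R) w * AdjoinRoot.root (qpoly R) - 1} with hJ1
  set J2 := Ideal.span {pp w} with hJ2
  have h6 : (Ideal.Quotient.mk J2 w)^6 = 1 := by rw [← map_pow, hw, map_one]
  have hpp : (Ideal.Quotient.mk J2 w)^5 + (Ideal.Quotient.mk J2 w)^4 + (Ideal.Quotient.mk J2 w)^3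
      + (Ideal.Quotient.mk J2 w)^2 + Ideal.Quotient.mk J2 w + 1 = 0 := by
    have : Ideal.Quotient.mk J2 (pp w) = 0 :=
      Ideal.Quotient.eq_zero_iff_mem.mpr (Ideal.subset_span rfl)
    simpa [pp] using this
  have hev : Polynomial.eval₂ (Ideal.Quotient.mk J2) ((Ideal.Quotient.mk J2 w)^5) (qpoly R) = 0 := by
    simp only [qpoly, Polynomial.eval₂_add, Polynomial.eval₂_pow, Polynomial.eval₂_X, Polynomial.eval₂_one]
    set x := Ideal.Quotient.mk J2 w
    linear_combination hpp + (x^19+x^14+x^13+x^9+x^8+x^7+x^4+x^3+x^2+x) * h6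
  set f0 : AdjoinRoot (qpoly R) →+* R ⧸ J2 :=
    AdjoinRoot.lift (Ideal.Quotient.mk J2) ((Ideal.Quotient.mk J2 w)^5) hev with hf0
  have hker : J1 ≤ RingHom.ker f0 := by
    rw [hJ1, Ideal.span_le, Set.singleton_subset_iff]
    simp only [SetLike.mem_coe, RingHom.mem_ker, map_sub, map_mul, map_one, hf0,
      AdjoinRoot.lift_of, AdjoinRoot.lift_root]
    linear_combination h6
  set f : (AdjoinRoot (qpoly R) ⧸ J1) →+* R ⧸ J2 :=
    Ideal.Quotient.lift J1 f0 (fun a ha => hker ha) with hf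
  set ρ := Ideal.Quotient.mk J1 (AdjoinRoot.root (qpoly R)) with hρ
  set ω := Ideal.Quotient.mk J1 (AdjoinRoot.of (qpoly R) w) with hω
  have hρ6 : ρ^6 = 1 := by rw [hρ, ← map_pow, root_pow_six, map_one]
  have hwρ : ω * ρ = 1 := by
    have : Ideal.Quotient.mk J1 (AdjoinRoot.of (qpoly R) w * AdjoinRoot.root (qpoly R) - 1) = 0 :=
      Ideal.Quotient.eq_zero_iff_mem.mpr (Ideal.subset_span rfl)
    rw [map_sub, map_mul, map_one, sub_eq_zero] at this
    exact this
  have hw5 : ω = ρ^5 := by linear_combination ρ^5 * hwρ - ω * hρ6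
  have hppρ : ρ^5+ρ^4+ρ^3+ρ^2+ρ+1 = 0 := by
    have := congrArg (Ideal.Quotient.mk J1) (pp_root_eq_zero (R := R))
    simpa [pp] using this
  set g0 : R →+* (AdjoinRoot (qpoly R) ⧸ J1) :=
    (Ideal.Quotient.mk J1).comp (AdjoinRoot.of (qpoly R)) with hg0
  have hgker : J2 ≤ RingHom.ker g0 := by
    rw [hJ2, Ideal.span_le, Set.singleton_subset_iff]
    simp only [SetLike.mem_coe, RingHom.mem_ker, pp, map_add, map_pow, map_one, hg0,
      RingHom.comp_apply]
    rw [← hω, hw5]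
    linear_combination hppρ + (ρ^19+ρ^14+ρ^13+ρ^9+ρ^8+ρ^7+ρ^4+ρ^3+ρ^2+ρ) * hρ6
  set g : (R ⧸ J2) →+* (AdjoinRoot (qpoly R) ⧸ J1) :=
    Ideal.Quotient.lift J2 g0 (fun a ha => hgker ha) with hg
  refine RingEquiv.ofRingHom f g ?_ ?_
  swap
  · apply Ideal.Quotient.ringHom_ext
    have key : ((g.comp f).comp (Ideal.Quotient.mk J1)).comp (AdjoinRoot.mk (qpoly R)) =
        ((RingHom.id _).comp (Ideal.Quotient.mk J1)).comp (AdjoinRoot.mk (qpoly R)) := by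
      apply Polynomial.ringHom_ext'
      · ext r
        simp [hf, hg, hf0, hg0, AdjoinRoot.lift_of, AdjoinRoot.mk_C]
      · simp only [RingHom.comp_apply, AdjoinRoot.mk_X, RingHom.id_apply]
        rw [show Ideal.Quotient.mk J1 (AdjoinRoot.root (qpoly R)) = ρ from rfl]
        have : f ρ = (Ideal.Quotient.mk J2 w)^5 := by
          simp [hf, hρ, hf0, AdjoinRoot.lift_root]
        rw [this]
        have : g ((Ideal.Quotient.mk J2 w)^5) = ω^5 := by
          simp [hg, hg0, hω]
        rw [this, hw5]
        linear_combination (ρ^19+ρ^13+ρ^7+ρ) * hρ6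
    exact RingHom.ext fun a => by
      obtain ⟨p, rfl⟩ := AdjoinRoot.mk_surjective a
      exact RingHom.congr_fun key p
  · apply Ideal.Quotient.ringHom_ext
    ext r
    simp [hf, hg, hf0, hg0, AdjoinRoot.lift_of]

/-! ### finrank transfer along ring equivalences of `ℚ`-algebras -/

variable {A B : Type} [CommRing A] [CommRing B] [Algebra ℚ A] [Algebra ℚ B]

def ratLinear (e : A ≃+* B) : A ≃ₗ[ℚ] B :=
  { e.toAddEquiv with
    map_smul' := fun q x => by
      show e (q • x) = q • e x
      rw [Algebra.smul_def, Algebra.smul_def, map_mul]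
      congr 1
      exact RingHom.map_rat_algebraMap (e : A →+* B) q }

lemma finrank_eq_of_ringEquiv (e : A ≃+* B) :
    Module.finrank ℚ A = Module.finrank ℚ B := (ratLinear e).finrank_eq

lemma finite_of_ringEquiv (e : A ≃+* B) [Module.Finite ℚ A] : Module.Finite ℚ B :=
  Module.Finite.equiv (ratLinear e)

instance quotFinite (I : Ideal A) [Module.Finite ℚ A] : Module.Finite ℚ (A ⧸ I) :=
  Module.Finite.of_surjective (Ideal.Quotient.mkₐ ℚ I).toLinearMap
    (Ideal.Quotient.mkₐ_surjective ℚ I)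

/-! ### CRT dimension count -/

lemma crt_finrank [Module.Finite ℚ A] (v : A) (hv : v^6 = 1) :
    Module.finrank ℚ (A ⧸ Ideal.span {pp v}) + Module.finrank ℚ (A ⧸ Ideal.span {v - 1})
      = Module.finrank ℚ A := by
  set I := Ideal.span {v - 1}
  set J := Ideal.span {pp v}
  have hco : IsCoprime I J := by
    rw [Ideal.isCoprime_span_singleton_iff]
    set c := algebraMap ℚ A (6⁻¹) with hc
    have h6c : (6 : A) * c = 1 := by
      rw [hc, (map_ofNat (algebraMap ℚ A) 6).symm, ← map_mul]
      norm_num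
    exact ⟨-(c*(v^4+2*v^3+3*v^2+4*v+5)), c, by simp only [pp]; linear_combination h6c⟩
  have hmul : I * J = ⊥ := by
    rw [Ideal.span_singleton_mul_span_singleton,
      show (v-1) * pp v = 0 by simp only [pp]; linear_combination hv]
    exact Ideal.span_singleton_eq_bot.mpr rfl
  have e : A ≃+* (A ⧸ I) × (A ⧸ J) :=
    ((RingEquiv.quotientBot A).symm.trans (Ideal.quotEquivOfEq hmul.symm)).trans
      (Ideal.quotientMulEquivQuotientProd I J hco)
  rw [finrank_eq_of_ringEquiv e, Module.finrank_prod, add_comm]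

/-! ### The tower `C1 ⊂ C2 ⊂ C3` -/

abbrev C1 := AdjoinRoot (qpoly ℚ)
abbrev C2 := AdjoinRoot (qpoly C1)

open Module in
lemma fr1 : Module.finrank ℚ C1 = 5 := by
  rw [finrank_eq_card_basis (AdjoinRoot.powerBasis' (qpoly_monic ℚ)).basis]
  simp [qpoly_natDegree]

instance : Nontrivial C1 := Module.nontrivial_of_finrank_eq_succ fr1

open Module in
lemma fr2 : Module.finrank ℚ C2 = 25 := by
  rw [finrank_eq_card_basis (Basis.smulTower (AdjoinRoot.powerBasis' (qpoly_monic ℚ)).basis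
    (AdjoinRoot.powerBasis' (qpoly_monic C1)).basis)]
  simp [qpoly_natDegree]

instance : Nontrivial C2 := Module.nontrivial_of_finrank_eq_succ fr2

abbrev C3 := AdjoinRoot (qpoly C2)

open Module in
lemma fr3 : Module.finrank ℚ C3 = 125 := by
  rw [finrank_eq_card_basis (Basis.smulTower (Basis.smulTower
    (AdjoinRoot.powerBasis' (qpoly_monic ℚ)).basis
    (AdjoinRoot.powerBasis' (qpoly_monic C1)).basis)
    (AdjoinRoot.powerBasis' (qpoly_monic C2)).basis)]
  simp [qpoly_natDegree]

instance : Nontrivial C3 := Module.nontrivial_of_finrank_eq_succ fr3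

instance : Module.Finite ℚ C1 :=
  Module.Finite.of_basis (AdjoinRoot.powerBasis' (qpoly_monic ℚ)).basis
instance : Module.Finite ℚ C2 :=
  Module.Finite.of_basis (Module.Basis.smulTower (AdjoinRoot.powerBasis' (qpoly_monic ℚ)).basis
    (AdjoinRoot.powerBasis' (qpoly_monic C1)).basis)
instance : Module.Finite ℚ C3 :=
  Module.Finite.of_basis (Module.Basis.smulTower (Module.Basis.smulTower
    (AdjoinRoot.powerBasis' (qpoly_monic ℚ)).basis
    (AdjoinRoot.powerBasis' (qpoly_monic C1)).basis)
    (AdjoinRoot.powerBasis' (qpoly_monic C2)).basis)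

def r1 : C1 := AdjoinRoot.root (qpoly ℚ)
def r2 : C2 := AdjoinRoot.root (qpoly C1)
def r3 : C3 := AdjoinRoot.root (qpoly C2)
def i12 : C1 →+* C2 := AdjoinRoot.of (qpoly C1)
def i23 : C2 →+* C3 := AdjoinRoot.of (qpoly C2)
def v2 : C2 := i12 r1 * r2
def v3 : C3 := i23 v2 * r3

lemma hv2 : v2^6 = 1 := by
  rw [v2, mul_pow, ← map_pow, r1, r2, root_pow_six, root_pow_six, map_one, mul_one]

lemma hv3 : v3^6 = 1 := by
  rw [v3, mul_pow, ← map_pow, hv2, r3, root_pow_six, map_one, mul_one]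

/-! ### The dimension chain -/

lemma dimQ1 : Module.finrank ℚ (C1 ⧸ Ideal.span {pp r1}) = 5 := by
  have h : Ideal.span {pp r1} = (⊥ : Ideal C1) := by
    rw [r1, pp_root_eq_zero]
    exact Ideal.span_singleton_eq_bot.mpr rfl
  rw [finrank_eq_of_ringEquiv ((Ideal.quotEquivOfEq h).trans (RingEquiv.quotientBot C1)), fr1]

lemma dimI2 : Module.finrank ℚ (C2 ⧸ Ideal.span {v2 - 1}) = 5 := by
  have e := elimEquiv (R := C1) r1 (by rw [r1]; exact root_pow_six)
  rw [show Ideal.span {v2 - 1} = Ideal.span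
    {AdjoinRoot.of (qpoly C1) r1 * AdjoinRoot.root (qpoly C1) - 1} from rfl]
  rw [finrank_eq_of_ringEquiv e, dimQ1]

lemma dimQ2 : Module.finrank ℚ (C2 ⧸ Ideal.span {pp v2}) = 20 := by
  have h := crt_finrank v2 hv2
  rw [fr2, dimI2] at h
  omega

lemma dimI3 : Module.finrank ℚ (C3 ⧸ Ideal.span {v3 - 1}) = 20 := by
  have e := elimEquiv (R := C2) v2 hv2
  rw [show Ideal.span {v3 - 1} = Ideal.span
    {AdjoinRoot.of (qpoly C2) v2 * AdjoinRoot.root (qpoly C2) - 1} from rfl]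
  rw [finrank_eq_of_ringEquiv e, dimQ2]

lemma dimQ3 : Module.finrank ℚ (C3 ⧸ Ideal.span {pp v3}) = 105 := by
  have h := crt_finrank v3 hv3
  rw [fr3, dimI3] at h
  omega


abbrev S := MvPolynomial (Fin 4) ℤ ⧸ fermatIdeal6

def rel : Option (Fin 4) → MvPolynomial (Fin 4) ℤ :=
  fun o => o.elim (X 0 * X 1 * X 2 * X 3 - 1) (fun i => ∑ j ∈ Finset.range 6, (X i) ^ j)

lemma range_rel : Set.range rel = {X 0 * X 1 * X 2 * X 3 - 1} ∪
    Set.range fun i : Fin 4 => ∑ j ∈ Finset.range 6, (X i) ^ j := by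
  ext p
  constructor
  · rintro ⟨(_ | i), rfl⟩
    · exact Or.inl rfl
    · exact Or.inr ⟨i, rfl⟩
  · rintro (rfl | ⟨i, rfl⟩)
    · exact ⟨none, rfl⟩
    · exact ⟨some i, rfl⟩

lemma aeval_mk_eq : (aeval fun i => Ideal.Quotient.mk fermatIdeal6 (X i) :
    MvPolynomial (Fin 4) ℤ →ₐ[ℤ] S) = Ideal.Quotient.mkₐ ℤ fermatIdeal6 := by
  apply MvPolynomial.algHom_ext
  intro i
  simp

lemma hsurj : Function.Surjective
    (aeval (R := ℤ) (S₁ := S) fun i => Ideal.Quotient.mk fermatIdeal6 (X i)) := by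
  rw [show (⇑(aeval fun i => Ideal.Quotient.mk fermatIdeal6 (X i) :
      MvPolynomial (Fin 4) ℤ →ₐ[ℤ] S)) = ⇑(Ideal.Quotient.mkₐ ℤ fermatIdeal6) from
    congrArg _ aeval_mk_eq]
  exact Ideal.Quotient.mkₐ_surjective ℤ _

def P : Algebra.Presentation ℤ S (Fin 4) (Option (Fin 4)) where
  toGenerators := Algebra.Generators.ofSurjective
    (fun i : Fin 4 => Ideal.Quotient.mk fermatIdeal6 (X i)) hsurj
  relation := rel
  span_range_relation_eq_ker := by
    rw [range_rel]
    show Ideal.span _ = (Algebra.Generators.ofSurjective _ hsurj).ker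
    rw [Algebra.Generators.ker_eq_ker_aeval_val]
    have : (Algebra.Generators.ofSurjective
        (fun i : Fin 4 => Ideal.Quotient.mk fermatIdeal6 (X i)) hsurj).val =
        fun i : Fin 4 => Ideal.Quotient.mk fermatIdeal6 (X i) := rfl
    rw [this, aeval_mk_eq]
    show fermatIdeal6 = RingHom.ker (Ideal.Quotient.mkₐ ℤ fermatIdeal6)
    exact (Ideal.Quotient.mkₐ_ker ℤ _).symm

def Pb : Algebra.Presentation ℚ (ℚ ⊗[ℤ] S) (Fin 4) (Option (Fin 4)) := P.baseChange (T := ℚ)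

def Jq : Ideal (MvPolynomial (Fin 4) ℚ) :=
  Ideal.span ({X 0 * X 1 * X 2 * X 3 - 1} ∪
    Set.range fun i : Fin 4 => ∑ j ∈ Finset.range 6, (X i) ^ j)

lemma hJq : Jq = Pb.ker := by
  have h0 : Pb.relation none = (X 0 * X 1 * X 2 * X 3 - 1 : MvPolynomial (Fin 4) ℚ) := by
    show MvPolynomial.map (algebraMap ℤ ℚ) (rel none) = _
    simp [rel]
  have hs : ∀ i : Fin 4, Pb.relation (some i) =
      (∑ j ∈ Finset.range 6, (X i) ^ j : MvPolynomial (Fin 4) ℚ) := by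
    intro i
    show MvPolynomial.map (algebraMap ℤ ℚ) (rel (some i)) = _
    simp [rel]
  have hset : Set.range Pb.relation = (({X 0 * X 1 * X 2 * X 3 - 1} ∪
      Set.range fun i : Fin 4 => ∑ j ∈ Finset.range 6, (X i) ^ j :
        Set (MvPolynomial (Fin 4) ℚ))) := by
    ext p
    constructor
    · rintro ⟨(_ | i), rfl⟩
      · exact Or.inl (by rw [h0]; rfl)
      · exact Or.inr ⟨i, (hs i).symm⟩
    · rintro (rfl | ⟨i, rfl⟩)
      · exact ⟨none, h0⟩
      · exact ⟨some i, hs i⟩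
  rw [← Pb.span_range_relation_eq_ker, hset]
  rfl

def f4 : MvPolynomial (Fin 4) ℚ →ₐ[ℚ] ℚ ⊗[ℤ] S :=
  aeval (fun i => (1 : ℚ) ⊗ₜ[ℤ] Ideal.Quotient.mk fermatIdeal6 (X i))

set_option maxHeartbeats 1000000 in
lemma hker4 : RingHom.ker f4 = Jq := (hJq.trans Pb.ker_eq_ker_aeval_val).symm

set_option maxHeartbeats 1000000 in
lemma hsurj4 : Function.Surjective f4 := Pb.algebraMap_surjective

def E0 : (MvPolynomial (Fin 4) ℚ ⧸ Jq) ≃+* ℚ ⊗[ℤ] S :=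
  (Ideal.quotEquivOfEq hker4.symm).trans
    (Ideal.quotientKerAlgEquivOfSurjective (f := f4) hsurj4).toRingEquiv


/-! ### The main isomorphism `MvPolynomial (Fin 4) ℚ ⧸ Jq ≃ C3 ⧸ (pp v3)` -/

abbrev Tq := MvPolynomial (Fin 4) ℚ ⧸ Jq
abbrev Q3 := C3 ⧸ Ideal.span {pp v3}

def mkQ3 : C3 →+* Q3 := Ideal.Quotient.mk _

def xv (i : Fin 4) : Tq := Ideal.Quotient.mk Jq (X i)

lemma hx_prod : xv 0 * xv 1 * xv 2 * xv 3 = 1 := by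
  have h : Ideal.Quotient.mk Jq (X 0 * X 1 * X 2 * X 3 - 1) = 0 :=
    Ideal.Quotient.eq_zero_iff_mem.mpr (Ideal.subset_span (Or.inl rfl))
  rw [map_sub, map_mul, map_mul, map_mul, map_one, sub_eq_zero] at h
  exact h

lemma hppx (i : Fin 4) : (xv i)^5+(xv i)^4+(xv i)^3+(xv i)^2+xv i+1 = 0 := by
  have h : Ideal.Quotient.mk Jq (∑ j ∈ Finset.range 6, (X i : MvPolynomial (Fin 4) ℚ)^j) = 0 :=
    Ideal.Quotient.eq_zero_iff_mem.mpr (Ideal.subset_span (Or.inr ⟨i, rfl⟩))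
  simp only [Finset.sum_range_succ, Finset.sum_range_zero, map_add, map_pow, map_one,
    zero_add, map_zero, pow_zero] at h
  rw [show Ideal.Quotient.mk Jq (X i) = xv i from rfl] at h
  linear_combination h

lemma hx0_6 : (xv 0)^6 = 1 := by linear_combination (xv 0 - 1) * hppx 0

lemma hx_prod123 : xv 1 * xv 2 * xv 3 = (xv 0)^5 := by
  linear_combination (xv 0)^5 * hx_prod - (xv 1 * xv 2 * xv 3) * hx0_6

def gQ : Fin 4 → Q3 := ![mkQ3 (v3^5), mkQ3 (i23 (i12 r1)), mkQ3 (i23 r2), mkQ3 r3]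

def Phi : MvPolynomial (Fin 4) ℚ →ₐ[ℚ] Q3 := aeval gQ

lemma hV6 : (mkQ3 v3)^6 = 1 := by rw [← map_pow, hv3, map_one]

lemma hppV : (mkQ3 v3)^5+(mkQ3 v3)^4+(mkQ3 v3)^3+(mkQ3 v3)^2+mkQ3 v3+1 = 0 := by
  have h : mkQ3 (pp v3) = 0 := Ideal.Quotient.eq_zero_iff_mem.mpr (Ideal.subset_span rfl)
  simpa [pp] using h

lemma hfold : i23 (i12 r1) * i23 r2 * r3 = v3 := by
  rw [v3, v2, map_mul]

lemma ppgQ (i : Fin 4) : (gQ i)^5+(gQ i)^4+(gQ i)^3+(gQ i)^2+(gQ i)+1 = 0 := by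
  fin_cases i
  · show (mkQ3 (v3^5))^5+(mkQ3 (v3^5))^4+(mkQ3 (v3^5))^3+(mkQ3 (v3^5))^2+(mkQ3 (v3^5))+1 = 0
    rw [map_pow]
    set V := mkQ3 v3
    linear_combination hppV + (V^19+V^14+V^13+V^9+V^8+V^7+V^4+V^3+V^2+V) * hV6
  · show (mkQ3 (i23 (i12 r1)))^5+(mkQ3 (i23 (i12 r1)))^4+(mkQ3 (i23 (i12 r1)))^3
      +(mkQ3 (i23 (i12 r1)))^2+(mkQ3 (i23 (i12 r1)))+1 = 0
    have h := congrArg (fun z : C1 => mkQ3 (i23 (i12 z))) (pp_root_eq_zero (R := ℚ))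
    simp only [pp, map_add, map_pow, map_one, map_zero] at h
    rw [show AdjoinRoot.root (qpoly ℚ) = r1 from rfl] at h
    linear_combination h
  · show (mkQ3 (i23 r2))^5+(mkQ3 (i23 r2))^4+(mkQ3 (i23 r2))^3
      +(mkQ3 (i23 r2))^2+(mkQ3 (i23 r2))+1 = 0
    have h := congrArg (fun z : C2 => mkQ3 (i23 z)) (pp_root_eq_zero (R := C1))
    simp only [pp, map_add, map_pow, map_one, map_zero] at h
    rw [show AdjoinRoot.root (qpoly C1) = r2 from rfl] at h
    linear_combination h
  · show (mkQ3 r3)^5+(mkQ3 r3)^4+(mkQ3 r3)^3+(mkQ3 r3)^2+(mkQ3 r3)+1 = 0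
    have h := congrArg (fun z : C3 => mkQ3 z) (pp_root_eq_zero (R := C2))
    simp only [pp, map_add, map_pow, map_one, map_zero] at h
    rw [show AdjoinRoot.root (qpoly C2) = r3 from rfl] at h
    linear_combination h

set_option maxHeartbeats 1000000 in
lemma hPhiJq : Jq ≤ RingHom.ker (Phi : MvPolynomial (Fin 4) ℚ →+* Q3) := by
  rw [Jq, Ideal.span_le]
  rintro p (rfl | ⟨i, rfl⟩)
  · simp only [SetLike.mem_coe, RingHom.mem_ker, RingHom.coe_coe, Phi, map_sub, map_mul,
      map_one, aeval_X]
    rw [show gQ 0 = mkQ3 (v3^5) from rfl, show gQ 1 = mkQ3 (i23 (i12 r1)) from rfl,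
      show gQ 2 = mkQ3 (i23 r2) from rfl, show gQ 3 = mkQ3 r3 from rfl,
      ← map_mul, ← map_mul, ← map_mul,
      show v3^5 * i23 (i12 r1) * i23 r2 * r3 = v3^6 from by
        rw [show v3^5 * i23 (i12 r1) * i23 r2 * r3 = v3^5 * (i23 (i12 r1) * i23 r2 * r3) from by
          ring, hfold]; ring,
      hv3, map_one, sub_self]
  · simp only [SetLike.mem_coe, RingHom.mem_ker, RingHom.coe_coe, Phi, map_sum, map_pow, aeval_X]
    simp only [Finset.sum_range_succ, Finset.sum_range_zero, zero_add, pow_zero]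
    linear_combination ppgQ i

def PhiBar : Tq →+* Q3 :=
  Ideal.Quotient.lift Jq (Phi : MvPolynomial (Fin 4) ℚ →+* Q3) (fun _ ha => hPhiJq ha)

def psi1 : C1 →+* Tq :=
  AdjoinRoot.lift (algebraMap ℚ Tq) (xv 1) (by
    simp only [qpoly, Polynomial.eval₂_add, Polynomial.eval₂_pow, Polynomial.eval₂_X,
      Polynomial.eval₂_one]
    linear_combination hppx 1)

def psi2 : C2 →+* Tq :=
  AdjoinRoot.lift psi1 (xv 2) (by
    simp only [qpoly, Polynomial.eval₂_add, Polynomial.eval₂_pow, Polynomial.eval₂_X,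
      Polynomial.eval₂_one]
    linear_combination hppx 2)

def psi3 : C3 →+* Tq :=
  AdjoinRoot.lift psi2 (xv 3) (by
    simp only [qpoly, Polynomial.eval₂_add, Polynomial.eval₂_pow, Polynomial.eval₂_X,
      Polynomial.eval₂_one]
    linear_combination hppx 3)

lemma psi3_a1 : psi3 (i23 (i12 r1)) = xv 1 := by
  simp only [psi3, psi2, psi1, i23, i12, r1, AdjoinRoot.lift_of, AdjoinRoot.lift_root]

lemma psi3_a2 : psi3 (i23 r2) = xv 2 := by
  simp only [psi3, psi2, i23, r2, AdjoinRoot.lift_of, AdjoinRoot.lift_root]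

lemma psi3_a3 : psi3 r3 = xv 3 := by
  simp only [psi3, r3, AdjoinRoot.lift_root]

lemma psi3_v3 : psi3 v3 = xv 1 * xv 2 * xv 3 := by
  rw [v3, map_mul, v2, map_mul, map_mul, psi3_a1, psi3_a2, psi3_a3]

lemma hpsiker : Ideal.span {pp v3} ≤ RingHom.ker psi3 := by
  rw [Ideal.span_le, Set.singleton_subset_iff]
  simp only [SetLike.mem_coe, RingHom.mem_ker, pp, map_add, map_pow, map_one]
  rw [psi3_v3, hx_prod123]
  set y := xv 0
  linear_combination hppx 0 + (y^19+y^14+y^13+y^9+y^8+y^7+y^4+y^3+y^2+y) * hx0_6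

def PsiBar : Q3 →+* Tq :=
  Ideal.Quotient.lift (Ideal.span {pp v3}) psi3 (fun _ ha => hpsiker ha)

lemma PsiBar_mkQ3 (z : C3) : PsiBar (mkQ3 z) = psi3 z := rfl

lemma PhiBar_xv (i : Fin 4) : PhiBar (xv i) = gQ i := by
  simp only [PhiBar, xv, Ideal.Quotient.lift_mk, RingHom.coe_coe, Phi, aeval_X]

lemma PsiBar_gQ (i : Fin 4) : PsiBar (gQ i) = xv i := by
  fin_cases i
  · show PsiBar (mkQ3 (v3^5)) = xv 0
    rw [show mkQ3 (v3^5) = (mkQ3 v3)^5 from map_pow _ _ _, map_pow, PsiBar_mkQ3, psi3_v3,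
      hx_prod123]
    set y := xv 0
    linear_combination (y^19+y^13+y^7+y) * hx0_6
  · show PsiBar (mkQ3 (i23 (i12 r1))) = xv 1
    rw [PsiBar_mkQ3, psi3_a1]
  · show PsiBar (mkQ3 (i23 r2)) = xv 2
    rw [PsiBar_mkQ3, psi3_a2]
  · show PsiBar (mkQ3 r3) = xv 3
    rw [PsiBar_mkQ3, psi3_a3]

set_option maxHeartbeats 2000000 in
def mainEquiv : Tq ≃+* Q3 := by
  refine RingEquiv.ofRingHom PhiBar PsiBar ?_ ?_
  swap
  · -- PsiBar.comp PhiBar = id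
    apply Ideal.Quotient.ringHom_ext
    apply MvPolynomial.ringHom_ext
    · intro r
      exact RingHom.congr_fun (RingHom.ext_rat
        (((PsiBar.comp PhiBar).comp (Ideal.Quotient.mk Jq)).comp (C : ℚ →+* _))
        (((RingHom.id Tq).comp (Ideal.Quotient.mk Jq)).comp (C : ℚ →+* _))) r
    · intro i
      simp only [RingHom.comp_apply, RingHom.id_apply, PhiBar, Ideal.Quotient.lift_mk,
        RingHom.coe_coe, Phi, aeval_X]
      exact PsiBar_gQ i
  · -- PhiBar.comp PsiBar = id
    apply Ideal.Quotient.ringHom_ext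
    apply adjoinRootExt
    apply Polynomial.ringHom_ext'
    · apply adjoinRootExt
      apply Polynomial.ringHom_ext'
      · apply adjoinRootExt
        apply Polynomial.ringHom_ext'
        · exact RingHom.ext_rat _ _
        · -- level 1 X : element i23 (i12 r1)
          simp only [RingHom.comp_apply, AdjoinRoot.mk_X, AdjoinRoot.mk_C, RingHom.id_apply]
          show PhiBar (PsiBar (mkQ3 (i23 (i12 r1)))) = mkQ3 (i23 (i12 r1))
          rw [PsiBar_mkQ3, psi3_a1, PhiBar_xv]
          rfl
      · -- level 2 X : element i23 r2
        simp only [RingHom.comp_apply, AdjoinRoot.mk_X, AdjoinRoot.mk_C, RingHom.id_apply]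
        show PhiBar (PsiBar (mkQ3 (i23 r2))) = mkQ3 (i23 r2)
        rw [PsiBar_mkQ3, psi3_a2, PhiBar_xv]
        rfl
    · -- level 3 X : element r3
      simp only [RingHom.comp_apply, AdjoinRoot.mk_X, RingHom.id_apply]
      show PhiBar (PsiBar (mkQ3 r3)) = mkQ3 r3
      rw [PsiBar_mkQ3, psi3_a3, PhiBar_xv]
      rfl

lemma finrank_Tq : Module.finrank ℚ Tq = 105 := by
  rw [finrank_eq_of_ringEquiv mainEquiv, dimQ3]

instance : Module.Finite ℚ Tq := finite_of_ringEquiv mainEquiv.symm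

end

end Fermat6Aux

/-- `R ⊗ ℚ` is a 105-dimensional ℚ-vector space, for
`R = ℤ[u₀,u₁,u₂,u₃]/I₆`. -/
theorem stmt_12 :
    FiniteDimensional ℚ (ℚ ⊗[ℤ] (MvPolynomial (Fin 4) ℤ ⧸ fermatIdeal6)) ∧
    Module.finrank ℚ (ℚ ⊗[ℤ] (MvPolynomial (Fin 4) ℤ ⧸ fermatIdeal6)) = 105 := by
  constructor
  · exact Fermat6Aux.finite_of_ringEquiv (A := Fermat6Aux.Tq) (B := ℚ ⊗[ℤ] (MvPolynomial (Fin 4) ℤ ⧸ fermatIdeal6)) Fermat6Aux.E0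
  · rw [← Fermat6Aux.finrank_eq_of_ringEquiv (A := Fermat6Aux.Tq) (B := ℚ ⊗[ℤ] (MvPolynomial (Fin 4) ℤ ⧸ fermatIdeal6)) Fermat6Aux.E0, Fermat6Aux.finrank_Tq]
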